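/- Let M > 0 and τ ≥ 0 satisfy condition (★). Then the minimal time satisfies t*(M,τ) > τ. -/

import Mathlib

open RealInnerProductSpace Filter Topology

set_option maxHeartbeats 1000000 in
theorem stmt_4
    {H : Type*} [NormedAddCommGroup H] [InnerProductSpace ℝ H] [CompleteSpace H]
    (lam : ℝ) (hlam : 0 < lam)
    (S : ℝ → H →L[ℝ] H)
    (hS0 : S 0 = ContinuousLinearMap.id ℝ H)
    (hSadd : ∀ s t : ℝ, 0 ≤ s → 0 ≤ t → S (s + t) = (S s).comp (S t))
    (hSsa : ∀ t : ℝ, 0 ≤ t → ∀ x z : H, ⟪S t x, z⟫ = ⟪x, S t z⟫)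
    (hScont : ∀ y : H, ContinuousOn (fun t => S t y) (Set.Ici (0 : ℝ)))
    (hSdecay : ∀ t : ℝ, 0 ≤ t → ∀ y : H, ‖S t y‖ ≤ Real.exp (-(lam * t)) * ‖y‖)
    (P : H →L[ℝ] H)
    (hPsa : ∀ x z : H, ⟪P x, z⟫ = ⟪x, P z⟫)
    (hPnorm : ∀ u : H, ‖P u‖ ≤ ‖u‖)
    (y₀ : H) (r : ℝ) (hr : 0 < r)
    (tS : ℝ → ℝ → ℝ)
    (htS : ∀ M τ : ℝ, tS M τ =
      sInf {T : ℝ | τ ≤ T ∧ ∃ u : H, ‖u‖ ≤ M ∧ ‖S T y₀ + S (T - τ) (P u)‖ ≤ r})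
    (M τ : ℝ) (hM : 0 < M) (hτ : 0 ≤ τ)
    (hstar : ∀ u : H, ‖u‖ ≤ M → r < ‖S τ y₀ + P u‖) :
    τ < tS M τ := by
  set A : Set ℝ := {T : ℝ | τ ≤ T ∧ ∃ u : H, ‖u‖ ≤ M ∧ ‖S T y₀ + S (T - τ) (P u)‖ ≤ r}
    with hA
  rw [htS M τ]
  -- A is nonempty
  have hAne : A.Nonempty := by
    have h1 : Tendsto (fun t : ℝ => Real.exp (-(lam * t)) * ‖y₀‖) atTop (𝓝 0) := by
      have h2 : Tendsto (fun t : ℝ => lam * t) atTop atTop :=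
        Tendsto.const_mul_atTop hlam tendsto_id
      have h3 := Real.tendsto_exp_neg_atTop_nhds_zero.comp h2
      simpa using h3.mul_const ‖y₀‖
    have h4 : ∀ᶠ t in atTop, Real.exp (-(lam * t)) * ‖y₀‖ < r :=
      h1.eventually_lt_const hr
    obtain ⟨t, ht1, ht2⟩ := ((eventually_ge_atTop τ).and h4).exists
    refine ⟨t, ht1, 0, by simpa using hM.le, ?_⟩
    simp only [map_zero, add_zero]
    exact (hSdecay t (hτ.trans ht1) y₀).trans ht2.le
  have hAbdd : BddBelow A := ⟨τ, fun x hx => hx.1⟩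
  by_contra hcon
  push_neg at hcon
  -- extract sequences
  have hseq : ∀ n : ℕ, ∃ T : ℝ, T ∈ A ∧ T < τ + 1 / (n + 1 : ℝ) := by
    intro n
    have hlt : sInf A < τ + 1 / (n + 1 : ℝ) :=
      lt_of_le_of_lt hcon (lt_add_of_pos_right τ (by positivity))
    obtain ⟨T, hT, hT2⟩ := (csInf_lt_iff hAbdd hAne).mp hlt
    exact ⟨T, hT, hT2⟩
  choose T hTA hTlt using hseq
  choose u hu hur using fun n => (hTA n).2
  have hTge : ∀ n, τ ≤ T n := fun n => (hTA n).1
  have hTtend : Tendsto T atTop (𝓝 τ) := by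
    have h0 : Tendsto (fun n : ℕ => τ + 1 / (n + 1 : ℝ)) atTop (𝓝 (τ + 0)) :=
      tendsto_const_nhds.add tendsto_one_div_add_atTop_nhds_zero_nat
    rw [add_zero] at h0
    exact tendsto_of_tendsto_of_tendsto_of_le_of_le tendsto_const_nhds h0
      hTge (fun n => (hTlt n).le)
  -- weak-* cluster point of the controls
  set D := InnerProductSpace.toDual ℝ H with hD
  set g : ℕ → WeakDual ℝ H := fun n => StrongDual.toWeakDual (D (u n)) with hg
  have hgmem : ∀ n, g n ∈ WeakDual.toStrongDual ⁻¹' Metric.closedBall (0 : StrongDual ℝ H) M := by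
    intro n
    simp only [Set.mem_preimage, Metric.mem_closedBall, dist_zero_right]
    show ‖D (u n)‖ ≤ M
    rw [D.norm_map]
    exact hu n
  have hK := WeakDual.isCompact_closedBall (𝕜 := ℝ) (E := H) 0 M
  have hle : Filter.map g atTop ≤ Filter.principal
      (WeakDual.toStrongDual ⁻¹' Metric.closedBall (0 : StrongDual ℝ H) M) := by
    rw [Filter.le_principal_iff, Filter.mem_map]
    exact Filter.Eventually.of_forall hgmem
  obtain ⟨f₀, hf₀mem, hf₀cl⟩ := hK hle
  have hcl : MapClusterPt f₀ atTop g := hf₀cl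
  set u₀ : H := D.symm (WeakDual.toStrongDual f₀) with hu₀
  have hu₀M : ‖u₀‖ ≤ M := by
    have := hf₀mem
    simp only [Set.mem_preimage, Metric.mem_closedBall, dist_zero_right] at this
    rw [hu₀, D.symm.norm_map]
    exact this
  set z : H := S τ y₀ + P u₀ with hz
  have hzr : r < ‖z‖ := hstar u₀ hu₀M
  have hzpos : 0 < ‖z‖ := hr.trans hzr
  set δ : ℝ := ‖z‖ * (‖z‖ - r) / 4 with hδ
  have hδpos : 0 < δ := by
    have : 0 < ‖z‖ - r := sub_pos.mpr hzr
    positivity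
  -- evaluation at P z
  have hf₀Pz : f₀ (P z) = ⟪u₀, P z⟫ := by
    rw [hu₀]
    have : D (D.symm (WeakDual.toStrongDual f₀)) = WeakDual.toStrongDual f₀ :=
      D.apply_symm_apply _
    calc f₀ (P z) = (WeakDual.toStrongDual f₀) (P z) := rfl
      _ = (D (D.symm (WeakDual.toStrongDual f₀))) (P z) := by rw [this]
      _ = ⟪D.symm (WeakDual.toStrongDual f₀), P z⟫ := InnerProductSpace.toDual_apply_apply
  have heval : Continuous fun f : WeakDual ℝ H => f (P z) := WeakDual.eval_continuous (P z)
  have hfreq : ∃ᶠ n in atTop, |(g n) (P z) - ⟪u₀, P z⟫| < δ := by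
    have h5 : MapClusterPt (f₀ (P z)) atTop (fun n => (g n) (P z)) :=
      hcl.tendsto_comp heval.continuousAt
    have h6 := (mapClusterPt_iff_frequently.mp h5) (Metric.ball (f₀ (P z)) δ) (Metric.ball_mem_nhds _ hδpos)
    refine h6.mono fun n hn => ?_
    rw [Metric.mem_ball, Real.dist_eq] at hn
    rwa [hf₀Pz] at hn
  -- the convergent parts
  have hTnn : ∀ n, (0:ℝ) ≤ T n := fun n => hτ.trans (hTge n)
  have hSTy : Tendsto (fun n => S (T n) y₀) atTop (𝓝 (S τ y₀)) := by
    have hc := (hScont y₀) τ (Set.mem_Ici.mpr hτ)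
    have : Tendsto T atTop (𝓝[Set.Ici (0:ℝ)] τ) :=
      tendsto_nhdsWithin_iff.mpr ⟨hTtend, Filter.Eventually.of_forall fun n => hTnn n⟩
    exact hc.tendsto.comp this
  have hstend : Tendsto (fun n => T n - τ) atTop (𝓝 0) := by
    have := hTtend.sub_const τ
    simpa using this
  have hSsz : Tendsto (fun n => S (T n - τ) z) atTop (𝓝 z) := by
    have hc := (hScont z) 0 (Set.mem_Ici.mpr le_rfl)
    have hmem : Tendsto (fun n => T n - τ) atTop (𝓝[Set.Ici (0:ℝ)] 0) :=
      tendsto_nhdsWithin_iff.mpr ⟨hstend,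
        Filter.Eventually.of_forall fun n => sub_nonneg.mpr (hTge n)⟩
    have := hc.tendsto.comp hmem
    simpa [hS0, Function.comp_def] using this
  have habs : ∀ (L : ℝ), ∀ᶠ y in nhds L, |y - L| < δ := by
    intro L
    filter_upwards [Metric.ball_mem_nhds L hδpos] with y hy
    rwa [Metric.mem_ball, Real.dist_eq] at hy
  have hev1 : ∀ᶠ n in atTop, |⟪S (T n) y₀, z⟫ - ⟪S τ y₀, z⟫| < δ := by
    have ht : Tendsto (fun n => ⟪S (T n) y₀, z⟫) atTop (𝓝 ⟪S τ y₀, z⟫) :=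
      hSTy.inner tendsto_const_nhds
    exact ht.eventually (habs _)
  have hev2 : ∀ᶠ n in atTop, |⟪u n, P (S (T n - τ) z - z)⟫| < δ := by
    have ht : Tendsto (fun n => M * ‖S (T n - τ) z - z‖) atTop (𝓝 0) := by
      have h7 : Tendsto (fun n => S (T n - τ) z - z) atTop (𝓝 0) := by
        simpa using hSsz.sub_const z
      have := (h7.norm).const_mul M
      simpa using this
    filter_upwards [ht.eventually_lt_const hδpos] with n hn
    calc |⟪u n, P (S (T n - τ) z - z)⟫| ≤ ‖u n‖ * ‖P (S (T n - τ) z - z)‖ :=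
          abs_real_inner_le_norm _ _
      _ ≤ M * ‖S (T n - τ) z - z‖ :=
          mul_le_mul (hu n) (hPnorm _) (norm_nonneg _) hM.le
      _ < δ := hn
  obtain ⟨n, hn1, hn2, hn3⟩ := (hfreq.and_eventually (hev1.and hev2)).exists
  -- the key identity
  have hgn : (g n) (P z) = ⟪u n, P z⟫ := by
    calc (g n) (P z) = (D (u n)) (P z) := rfl
      _ = ⟪u n, P z⟫ := InnerProductSpace.toDual_apply_apply
  rw [hgn] at hn1
  have hsnn : (0:ℝ) ≤ T n - τ := sub_nonneg.mpr (hTge n)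
  have hkey : ⟪S (T n) y₀ + S (T n - τ) (P (u n)), z⟫
      = ⟪S (T n) y₀, z⟫ + ⟪u n, P (S (T n - τ) z - z)⟫ + ⟪u n, P z⟫ := by
    rw [inner_add_left]
    have h8 : ⟪S (T n - τ) (P (u n)), z⟫ = ⟪u n, P (S (T n - τ) z)⟫ := by
      rw [hSsa _ hsnn, hPsa]
    have h9 : ⟪u n, P (S (T n - τ) z)⟫
        = ⟪u n, P (S (T n - τ) z - z)⟫ + ⟪u n, P z⟫ := by
      rw [← inner_add_right, ← map_add]
      congr 2
      abel
    rw [h8, h9]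
    ring
  have hub : ⟪S (T n) y₀ + S (T n - τ) (P (u n)), z⟫ ≤ r * ‖z‖ := by
    calc ⟪S (T n) y₀ + S (T n - τ) (P (u n)), z⟫
        ≤ ‖S (T n) y₀ + S (T n - τ) (P (u n))‖ * ‖z‖ := real_inner_le_norm _ _
      _ ≤ r * ‖z‖ := mul_le_mul_of_nonneg_right (hur n) (norm_nonneg _)
  have hzz : ⟪S τ y₀, z⟫ + ⟪u₀, P z⟫ = ‖z‖ ^ 2 := by
    rw [← hPsa, ← inner_add_left, ← hz, real_inner_self_eq_norm_sq]
  have h10 : ‖z‖ ^ 2 - 3 * δ < r * ‖z‖ := by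
    have e1 : ⟪S τ y₀, z⟫ - δ < ⟪S (T n) y₀, z⟫ := by
      have := abs_lt.mp hn2; linarith [this.1]
    have e2 : -δ < ⟪u n, P (S (T n - τ) z - z)⟫ := by
      have := abs_lt.mp hn3; linarith [this.1]
    have e3 : ⟪u₀, P z⟫ - δ < ⟪u n, P z⟫ := by
      have := abs_lt.mp hn1; linarith [this.1]
    rw [hkey] at hub
    linarith [hub]
  have hp : 0 < ‖z‖ * (‖z‖ - r) := mul_pos hzpos (sub_pos.mpr hzr)
  rw [hδ] at h10
  nlinarith [hp, h10]
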